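/- arXiv:1906.02640 — 3 statements merged into one kernel-verified Lean document; each statement's English description precedes it below -/
import Mathlib

section
/- Let t ≥ 1 and d with 1 ≤ d ≤ t be integers, let δ ∈ (0,1), and set Δ = ⌈ln(1/δ)⌉ + 4 and p = d/t. The truncated estimator Z, which outputs i/(tΔ) if the geometric trial first succeeds at step i ≤ tΔ and outputs 0 otherwise, satisfies 1/(dΔ) − δ ≤ E[Z] = ∑_{i=1}^{tΔ} (i/(tΔ))·(1-p)^{i-1}·p ≤ 1/(dΔ). -/
lemma geom_partial (p q : ℝ) (hq : q = 1 - p) (hp : p ≠ 0) (n : ℕ) :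
    ∑ i ∈ Finset.Icc 1 n, (i : ℝ) * q ^ (i - 1) * p
      = (1 - q ^ n) / p - n * q ^ n := by
  induction n with
  | zero => simp
  | succ n ih =>
    rw [Finset.sum_Icc_succ_top (by omega), ih]
    have h1 : n + 1 - 1 = n := by omega
    rw [h1]
    subst hq
    push_cast
    field_simp
    ring

/-- Truncated estimator: `Z` outputs `i/(tΔ)` if the geometric trial (success probability
`p = d/t`) first succeeds at step `i ≤ tΔ`, and `0` otherwise, where
`Δ = ⌈ln(1/δ)⌉ + 4`. Then `1/(dΔ) − δ ≤ E[Z] = ∑_{i=1}^{tΔ} (i/(tΔ))·(1-p)^{i-1}·p ≤ 1/(dΔ)`. -/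
theorem stmt2 (t d : ℕ) (ht : 1 ≤ t) (hd : 1 ≤ d) (hdt : d ≤ t)
    (δ : ℝ) (hδ : δ ∈ Set.Ioo (0 : ℝ) 1)
    (Δ : ℕ) (hΔ : Δ = ⌈Real.log (1 / δ)⌉₊ + 4)
    (p : ℝ) (hp : p = (d : ℝ) / t) :
    1 / ((d : ℝ) * Δ) - δ ≤
        ∑ i ∈ Finset.Icc 1 (t * Δ), ((i : ℝ) / ((t : ℝ) * Δ)) * (1 - p) ^ (i - 1) * p ∧
    ∑ i ∈ Finset.Icc 1 (t * Δ), ((i : ℝ) / ((t : ℝ) * Δ)) * (1 - p) ^ (i - 1) * p ≤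
        1 / ((d : ℝ) * Δ) := by
  obtain ⟨hδ0, hδ1⟩ := hδ
  have ht0 : (0:ℝ) < t := by exact_mod_cast ht
  have hd0 : (0:ℝ) < d := by exact_mod_cast hd
  have hd1 : (1:ℝ) ≤ d := by exact_mod_cast hd
  have hdt' : (d:ℝ) ≤ t := by exact_mod_cast hdt
  have hΔ4 : 4 ≤ Δ := by omega
  have hΔ0 : (0:ℝ) < Δ := by
    have : (0:ℕ) < Δ := by omega
    exact_mod_cast this
  have hp0 : 0 < p := by rw [hp]; positivity
  have hp1 : p ≤ 1 := by rw [hp, div_le_one ht0]; exact hdt'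
  set q := 1 - p with hq
  have hq0 : 0 ≤ q := by simp [hq]; linarith
  set n := t * Δ with hn
  have hqn0 : 0 ≤ q ^ n := pow_nonneg hq0 n
  have key : ∑ i ∈ Finset.Icc 1 n, ((i : ℝ) / ((t:ℝ)*Δ)) * (1-p)^(i-1) * p
      = ((1 - q ^ n) / p - n * q ^ n) / ((t:ℝ)*Δ) := by
    rw [← geom_partial p q hq (ne_of_gt hp0) n, Finset.sum_div]
    exact Finset.sum_congr rfl fun i _ => by rw [← hq]; ring
  -- cast of n
  have hncast : (n : ℝ) = (t:ℝ) * Δ := by rw [hn]; push_cast; ring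
  have hinvp : 1 / p = (t:ℝ) / d := by rw [hp]; field_simp
  have hrhs : 1 / ((d:ℝ) * Δ) = (1 / p) / ((t:ℝ)*Δ) := by
    rw [hinvp]; field_simp
  -- bound on q^n
  have hqexp : q ^ n ≤ δ * Real.exp (-4) := by
    have h1 : q ≤ Real.exp (-p) := by
      have := Real.add_one_le_exp (-p)
      simp [hq]; linarith
    have h2 : q ^ n ≤ Real.exp (-p) ^ n := pow_le_pow_left₀ hq0 h1 n
    rw [← Real.exp_nat_mul] at h2
    have h3 : (n:ℝ) * (-p) = -((d:ℝ) * Δ) := by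
      rw [hncast, hp]; field_simp
    rw [h3] at h2
    have h4 : Real.exp (-((d:ℝ)*Δ)) ≤ Real.exp (-(Δ:ℝ)) := by
      apply Real.exp_le_exp.mpr
      nlinarith [mul_nonneg (by linarith [hd1] : (0:ℝ) ≤ (d:ℝ) - 1) (le_of_lt hΔ0)]
    have h5 : Real.exp (-(Δ:ℝ)) ≤ δ * Real.exp (-4) := by
      have hceil : Real.log (1/δ) ≤ (⌈Real.log (1/δ)⌉₊ : ℝ) := Nat.le_ceil _
      have hΔge : Real.log (1/δ) + 4 ≤ (Δ:ℝ) := by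
        rw [hΔ]; push_cast; linarith
      have : Real.exp (-(Δ:ℝ)) ≤ Real.exp (-(Real.log (1/δ) + 4)) :=
        Real.exp_le_exp.mpr (by linarith)
      calc Real.exp (-(Δ:ℝ)) ≤ Real.exp (-(Real.log (1/δ) + 4)) := this
        _ = δ * Real.exp (-4) := by
            rw [Real.log_div one_ne_zero (ne_of_gt hδ0), Real.log_one]
            rw [show -(0 - Real.log δ + 4) = Real.log δ + (-4) by ring,
              Real.exp_add, Real.exp_log hδ0]
    linarith
  -- key numeric inequality for lower bound: q^n/p + n*q^n ≤ δ * t * Δ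
  have hmain : q ^ n / p + (n:ℝ) * q ^ n ≤ δ * ((t:ℝ) * Δ) := by
    have h1p : 1 / p ≤ (t:ℝ) := by rw [hinvp]; exact div_le_self (le_of_lt ht0) (by exact_mod_cast hd)
    have h6 : q ^ n / p ≤ (t:ℝ) * q ^ n := by
      rw [div_eq_mul_inv, ← one_div]
      calc q ^ n * (1/p) ≤ q ^ n * t := by
            apply mul_le_mul_of_nonneg_left h1p hqn0
        _ = (t:ℝ) * q ^ n := by ring
    have h7 : q ^ n / p + (n:ℝ) * q ^ n ≤ ((t:ℝ) + (t:ℝ)*Δ) * q ^ n := by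
      rw [hncast]; linarith
    have hexp4 : (5:ℝ) ≤ Real.exp 4 := by
      have := Real.add_one_le_exp (4:ℝ); linarith
    have hexp4' : Real.exp (-4) ≤ 1/5 := by
      rw [Real.exp_neg]
      rw [inv_le_comm₀ (by positivity) (by norm_num)]
      simpa using hexp4
    have h8 : ((t:ℝ) + (t:ℝ)*Δ) * q ^ n ≤ ((t:ℝ) + (t:ℝ)*Δ) * (δ * Real.exp (-4)) := by
      apply mul_le_mul_of_nonneg_left hqexp (by positivity)
    have hΔ4' : (4:ℝ) ≤ Δ := by exact_mod_cast hΔ4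
    have h9 : ((t:ℝ) + (t:ℝ)*Δ) * (δ * Real.exp (-4)) ≤ δ * ((t:ℝ) * Δ) := by
      have hpos : 0 ≤ ((t:ℝ) + (t:ℝ)*Δ) * δ := by positivity
      calc ((t:ℝ) + (t:ℝ)*Δ) * (δ * Real.exp (-4))
          = (((t:ℝ) + (t:ℝ)*Δ) * δ) * Real.exp (-4) := by ring
        _ ≤ (((t:ℝ) + (t:ℝ)*Δ) * δ) * (1/5) := mul_le_mul_of_nonneg_left hexp4' hpos
        _ ≤ δ * ((t:ℝ) * Δ) := by
            nlinarith [mul_nonneg (mul_nonneg (le_of_lt hδ0) (le_of_lt ht0))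
              (by linarith : (0:ℝ) ≤ 4*(Δ:ℝ) - 1)]
    linarith
  rw [key]
  constructor
  · rw [hrhs]
    rw [div_sub' (ne_of_gt (by positivity : (0:ℝ) < (t:ℝ)*Δ))]
    apply div_le_div_of_nonneg_right ?_ (by positivity)
    have : δ * ((t:ℝ)*Δ) = ((t:ℝ)*Δ) * δ := by ring
    have hexpand : (1 - q ^ n) / p = 1/p - q ^ n / p := by ring
    rw [hexpand]
    linarith
  · rw [hrhs]
    apply div_le_div_of_nonneg_right ?_ (by positivity)
    have hexpand : (1 - q ^ n) / p = 1/p - q ^ n / p := by ring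
    have e2 : 0 ≤ q ^ n / p := div_nonneg hqn0 (le_of_lt hp0)
    have e3 : 0 ≤ (n:ℝ) * q ^ n := mul_nonneg (Nat.cast_nonneg n) hqn0
    rw [hexpand]
    linarith
end

section
/- Let t ≥ 1 and d with 1 ≤ d ≤ t be integers, let δ ∈ (0,1), set Δ = ⌈ln(1/δ)⌉ + 4 and p = d/t. Then the truncation error satisfies ∑_{i=tΔ+1}^∞ (i/(tΔ))·(1-p)^{i-1}·p ≤ δ. -/
/-- For integers `1 ≤ d ≤ t`, `δ ∈ (0,1)`, `Δ = ⌈ln(1/δ)⌉ + 4` and `p = d/t`, the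
truncation error satisfies `∑_{i=tΔ+1}^∞ (i/(tΔ))·(1-p)^{i-1}·p ≤ δ`.
(The tail is reindexed by `i = tΔ + k + 1`.) -/
theorem stmt7 (t d : ℕ) (ht : 1 ≤ t) (hd : 1 ≤ d) (hdt : d ≤ t)
    (δ : ℝ) (hδ : δ ∈ Set.Ioo (0 : ℝ) 1)
    (Δ : ℕ) (hΔ : Δ = ⌈Real.log (1 / δ)⌉₊ + 4)
    (p : ℝ) (hp : p = (d : ℝ) / t) :
    ∑' k : ℕ, (((t * Δ : ℕ) : ℝ) + k + 1) / ((t : ℝ) * Δ) * (1 - p) ^ (t * Δ + k) * p ≤ δ := by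
  obtain ⟨hδ0, hδ1⟩ := hδ
  have ht' : (0:ℝ) < t := by exact_mod_cast ht
  have hd' : (1:ℝ) ≤ d := by exact_mod_cast hd
  have hdt' : (d:ℝ) ≤ t := by exact_mod_cast hdt
  have hp0 : 0 < p := by rw [hp]; positivity
  have hp1 : p ≤ 1 := by rw [hp]; exact div_le_one_of_le₀ hdt' ht'.le
  set q : ℝ := 1 - p with hq
  have hq0 : 0 ≤ q := by simp [hq]; linarith
  have hq1 : q < 1 := by simp [hq]; linarith
  have hqn : ‖q‖ < 1 := by rw [Real.norm_eq_abs, abs_of_nonneg hq0]; exact hq1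
  set N : ℕ := t * Δ with hN
  have hlogpos : 0 < Real.log (1/δ) :=
    Real.log_pos (by rw [lt_div_iff₀ hδ0]; linarith)
  have hΔ5 : 5 ≤ Δ := by
    have : 1 ≤ ⌈Real.log (1 / δ)⌉₊ := Nat.one_le_iff_ne_zero.mpr
      (by positivity)
    omega
  have hN5 : 5 ≤ N := by calc 5 = 1 * 5 := by ring
                              _ ≤ t * Δ := Nat.mul_le_mul ht hΔ5
  have hN0 : (0:ℝ) < (N:ℝ) := by exact_mod_cast Nat.lt_of_lt_of_le (by norm_num) hN5
  have hN5' : (5:ℝ) ≤ (N:ℝ) := by exact_mod_cast hN5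
  have htΔ : (t:ℝ) * (Δ:ℝ) = (N:ℝ) := by rw [hN]; push_cast; ring
  set C : ℝ := q ^ N * p / (N:ℝ) with hC
  have s1 : Summable (fun k : ℕ => q ^ k) := summable_geometric_of_lt_one hq0 hq1
  have s2 : Summable (fun k : ℕ => (k:ℝ) * q ^ k) :=
    by simpa using summable_pow_mul_geometric_of_norm_lt_one 1 hqn
  have hterm : ∀ k : ℕ,
      (((t * Δ : ℕ) : ℝ) + k + 1) / ((t : ℝ) * Δ) * (1 - p) ^ (t * Δ + k) * p
        = C * ((N:ℝ)+1) * q ^ k + C * ((k:ℝ) * q ^ k) := by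
    intro k
    rw [← hq, ← hN, htΔ, pow_add, hC]
    ring
  have hval : ∑' k : ℕ, (((t * Δ : ℕ) : ℝ) + k + 1) / ((t : ℝ) * Δ) * (1 - p) ^ (t * Δ + k) * p
      = C * ((N:ℝ)+1) * (1 - q)⁻¹ + C * (q / (1 - q) ^ 2) := by
    rw [tsum_congr hterm, Summable.tsum_add ((s1.mul_left _)) (s2.mul_left C),
      tsum_mul_left, tsum_mul_left, tsum_geometric_of_lt_one hq0 hq1,
      tsum_coe_mul_geometric_of_norm_lt_one hqn]
  rw [hval]
  have h1p : 1 - q = p := by simp [hq]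
  rw [h1p]
  have hpne : p ≠ 0 := ne_of_gt hp0
  have hNne : (N:ℝ) ≠ 0 := ne_of_gt hN0
  -- rewrite the value
  have e1 : C * ((N:ℝ)+1) * p⁻¹ = q ^ N * (((N:ℝ)+1) / (N:ℝ)) := by
    rw [hC]; field_simp
  have e2 : C * (q / p ^ 2) = q ^ N * (q / ((N:ℝ) * p)) := by
    rw [hC]; field_simp
  rw [e1, e2]
  have hqNpos : 0 ≤ q ^ N := pow_nonneg hq0 N
  -- bound the bracket factors
  have hb1 : ((N:ℝ)+1) / (N:ℝ) ≤ 6/5 := by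
    rw [div_le_iff₀ hN0]; linarith
  have hNpval : (N:ℝ) * p = (d:ℝ) * (Δ:ℝ) := by
    rw [hN, hp]; push_cast; field_simp
  have hΔ5' : (5:ℝ) ≤ (Δ:ℝ) := by exact_mod_cast hΔ5
  have hNp5 : (5:ℝ) ≤ (N:ℝ) * p := by rw [hNpval]; nlinarith
  have hb2 : q / ((N:ℝ) * p) ≤ 1/5 := by
    rw [div_le_iff₀ (by positivity)]
    have hqle1 : q ≤ 1 := hq1.le
    linarith
  -- exponential bound on q ^ N
  have hqexp : q ≤ Real.exp (-p) := by
    have := Real.add_one_le_exp (-p); rw [hq]; linarith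
  have hqN : q ^ N ≤ δ * Real.exp (-4) := by
    have h1 : q ^ N ≤ Real.exp (-p) ^ N := pow_le_pow_left₀ hq0 hqexp N
    have h2 : Real.exp (-p) ^ N = Real.exp ((N:ℝ) * (-p)) :=
      (Real.exp_nat_mul (-p) N).symm
    have h3 : (N:ℝ) * (-p) = -((d:ℝ) * (Δ:ℝ)) := by rw [← hNpval]; ring
    have hd0 : (1:ℝ) ≤ (d:ℝ) := hd'
    have h4 : (Δ:ℝ) ≤ (d:ℝ) * (Δ:ℝ) := le_mul_of_one_le_left (Nat.cast_nonneg Δ) hd0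
    have hceil : Real.log (1/δ) ≤ (⌈Real.log (1 / δ)⌉₊ : ℝ) := Nat.le_ceil _
    have h5 : Real.log (1/δ) + 4 ≤ (Δ:ℝ) := by
      rw [hΔ]; push_cast; linarith
    have hlog : Real.log (1/δ) = -Real.log δ := by
      rw [one_div, Real.log_inv]
    have h6 : -(Δ:ℝ) ≤ Real.log δ + (-4) := by rw [hlog] at h5; linarith
    calc q ^ N ≤ Real.exp ((N:ℝ) * (-p)) := by rw [← h2]; exact h1
      _ ≤ Real.exp (Real.log δ + (-4)) := by
          apply Real.exp_le_exp.mpr; rw [h3]; linarith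
      _ = δ * Real.exp (-4) := by rw [Real.exp_add, Real.exp_log hδ0]
  have hexp4 : (5:ℝ) ≤ Real.exp 4 := by
    have := Real.add_one_le_exp (4:ℝ); linarith
  have hexpneg : Real.exp (-4) ≤ 1/5 := by
    rw [Real.exp_neg]
    rw [inv_le_comm₀ (Real.exp_pos 4) (by norm_num)]
    linarith
  calc q ^ N * (((N:ℝ)+1) / (N:ℝ)) + q ^ N * (q / ((N:ℝ) * p))
      ≤ q ^ N * (6/5) + q ^ N * (1/5) :=
        add_le_add (mul_le_mul_of_nonneg_left hb1 hqNpos)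
          (mul_le_mul_of_nonneg_left hb2 hqNpos)
    _ = (7/5) * q ^ N := by ring
    _ ≤ (7/5) * (δ * Real.exp (-4)) := by linarith
    _ ≤ δ := by
        have h7 : δ * Real.exp (-4) ≤ δ * (1/5) :=
          mul_le_mul_of_nonneg_left hexpneg hδ0.le
        linarith
end

section
/- Let F be a finite family of finite nonempty sets over a ground set U, let m = ∑_{A∈F} |A|, n = |⋃F|, and deg(x) = |{A ∈ F : x ∈ A}|, and let ε ∈ (0,1). Suppose for each x ∈ ⋃F the per-round acceptance probability p_x ∈ (0,1] satisfies 1/((1+ε)·deg(x)) ≤ p_x ≤ (1+ε)/deg(x), so the per-round output probability of x is q_x = (deg(x)/m)·p_x. Then the eventual output distribution μ_x = q_x / ∑_{y∈⋃F} q_y satisfies 1/((1+ε)²·n) ≤ μ_x ≤ (1+ε)²/n for every x ∈ ⋃F. -/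
/-- `F` is a finite family of finite nonempty sets, `m = ∑_{A∈F} |A| > 0`, `n = |⋃F|`,
`deg(x) = |{A ∈ F : x ∈ A}|`, `ε ∈ (0,1)`. If each per-round acceptance probability
`p_x ∈ (0,1]` satisfies `1/((1+ε)·deg(x)) ≤ p_x ≤ (1+ε)/deg(x)`, and the per-round
output probability of `x` is `q_x = (deg(x)/m)·p_x`, then the eventual output
distribution `μ_x = q_x / ∑_y q_y` satisfies `1/((1+ε)²·n) ≤ μ_x ≤ (1+ε)²/n`. -/
theorem stmt10 {U : Type*} [DecidableEq U] (F : Finset (Finset U))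
    (hne : ∀ A ∈ F, A.Nonempty)
    (m n : ℕ) (hm : m = ∑ A ∈ F, A.card) (hmpos : 0 < m)
    (hn : n = (F.biUnion id).card)
    (ε : ℝ) (hε : ε ∈ Set.Ioo (0 : ℝ) 1)
    (p : U → ℝ)
    (hp01 : ∀ x ∈ F.biUnion id, 0 < p x ∧ p x ≤ 1)
    (hpdeg : ∀ x ∈ F.biUnion id,
      1 / ((1 + ε) * ((F.filter (fun A => x ∈ A)).card : ℝ)) ≤ p x ∧
      p x ≤ (1 + ε) / ((F.filter (fun A => x ∈ A)).card : ℝ))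
    (q : U → ℝ)
    (hq : ∀ x, q x = (((F.filter (fun A => x ∈ A)).card : ℝ) / m) * p x)
    (μ : U → ℝ)
    (hμ : ∀ x, μ x = q x / ∑ y ∈ F.biUnion id, q y) :
    ∀ x ∈ F.biUnion id, 1 / ((1 + ε) ^ 2 * n) ≤ μ x ∧ μ x ≤ (1 + ε) ^ 2 / n := by
  obtain ⟨hε0, hε1⟩ := hε
  have hε1' : (0:ℝ) < 1 + ε := by linarith
  have hmR : (0:ℝ) < (m:ℝ) := by exact_mod_cast hmpos
  -- degree positivity on the union
  have hdegpos : ∀ x ∈ F.biUnion id, (0:ℝ) < ((F.filter (fun A => x ∈ A)).card : ℝ) := by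
    intro x hx
    rw [Finset.mem_biUnion] at hx
    obtain ⟨A, hA, hxA⟩ := hx
    have h1 : A ∈ F.filter (fun A => x ∈ A) := Finset.mem_filter.2 ⟨hA, hxA⟩
    have h2 : 0 < (F.filter (fun A => x ∈ A)).card := Finset.card_pos.2 ⟨A, h1⟩
    exact_mod_cast h2
  -- bounds on q
  have hqlb : ∀ x ∈ F.biUnion id, 1 / ((1 + ε) * m) ≤ q x := by
    intro x hx
    have hd := hdegpos x hx
    have hplb := (hpdeg x hx).1
    rw [hq]
    rw [div_mul_eq_mul_div, le_div_iff₀ hmR]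
    rw [div_le_iff₀ (by positivity)] at hplb
    calc 1 / ((1 + ε) * ↑m) * ↑m = 1 / (1 + ε) := by field_simp
      _ ≤ ((F.filter (fun A => x ∈ A)).card : ℝ) * p x := by
          rw [div_le_iff₀ hε1']
          nlinarith
  have hqub : ∀ x ∈ F.biUnion id, q x ≤ (1 + ε) / m := by
    intro x hx
    have hd := hdegpos x hx
    have hpub := (hpdeg x hx).2
    rw [hq]
    rw [div_mul_eq_mul_div, div_le_div_iff₀ hmR hmR]
    rw [le_div_iff₀ hd] at hpub
    nlinarith
  -- n positive
  have hnpos : 0 < n := by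
    rw [hn]
    apply Finset.card_pos.2
    have hFne : F.Nonempty := by
      by_contra h
      rw [Finset.not_nonempty_iff_eq_empty] at h
      simp [h] at hm
      omega
    obtain ⟨A, hA⟩ := hFne
    obtain ⟨x, hx⟩ := hne A hA
    exact ⟨x, Finset.mem_biUnion.2 ⟨A, hA, hx⟩⟩
  have hnR : (0:ℝ) < (n:ℝ) := by exact_mod_cast hnpos
  -- sum bounds
  set S := ∑ y ∈ F.biUnion id, q y with hS
  have hSlb : (n:ℝ) / ((1 + ε) * m) ≤ S := by
    rw [hn]
    have := Finset.sum_le_sum hqlb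
    simpa [Finset.sum_const, nsmul_eq_mul, div_eq_mul_inv, mul_comm] using this
  have hSub : S ≤ (n:ℝ) * ((1 + ε) / m) := by
    rw [hn]
    have := Finset.sum_le_sum hqub
    simpa [Finset.sum_const, nsmul_eq_mul] using this
  have hSpos : 0 < S := lt_of_lt_of_le (by positivity) hSlb
  intro x hx
  have hql := hqlb x hx
  have hqu := hqub x hx
  have hqpos : 0 < q x := lt_of_lt_of_le (by positivity) hql
  rw [hμ]
  constructor
  · have heq : 1 / ((1 + ε) ^ 2 * (n:ℝ)) = (1 / ((1 + ε) * ↑m)) / ((↑n) * ((1 + ε) / ↑m)) := by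
      field_simp
    rw [heq]
    exact div_le_div₀ hqpos.le hql hSpos hSub
  · have heq : (1 + ε) ^ 2 / (n:ℝ) = ((1 + ε) / ↑m) / ((↑n) / ((1 + ε) * ↑m)) := by
      field_simp
    rw [heq]
    exact div_le_div₀ (by positivity) hqu (by positivity) hSlb
end
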